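/- A ⊗-monoid in Poly (a 'collective'): a polynomial p with a monoid structure on positions p(1) and co-unital, co-associative distribution maps p[I·J] → p[I] × p[J], determines a dynamic operad whose n-ary coalgebra is the singleton coalgebra on the n-ary product map p^⊗n → p, and the required unit and associativity coherence maps of the dynamic operad are isomorphisms. -/

import Mathlib

/-- A map of polynomial functors: forwards on positions, backwards on directions. -/
structure PolyHom (p q : PFunctor.{0}) where
  onPos : p.A → q.A
  onDir : ∀ a : p.A, q.B (onPos a) → p.B a

/-- The identity map of polynomials. -/
def PolyHom.id (p : PFunctor.{0}) : PolyHom p p :=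
  ⟨fun a => a, fun _ d => d⟩

/-- Composition of maps of polynomials. -/
def PolyHom.comp {p q r : PFunctor.{0}} (f : PolyHom p q) (g : PolyHom q r) :
    PolyHom p r :=
  ⟨fun a => g.onPos (f.onPos a), fun a d => f.onDir a (g.onDir (f.onPos a) d)⟩

/-- The Dirichlet tensor product: positions multiply and directions multiply. -/
def PolyTensor (p q : PFunctor.{0}) : PFunctor.{0} :=
  ⟨p.A × q.A, fun ab => p.B ab.1 × q.B ab.2⟩

/-- The polynomial `y`, with one position and one direction. -/
def yPoly : PFunctor.{0} := ⟨PUnit, fun _ => PUnit⟩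

/-- Dirichlet tensor of maps of polynomials. -/
def PolyHom.tensor {p p' q q' : PFunctor.{0}} (f : PolyHom p p') (g : PolyHom q q') :
    PolyHom (PolyTensor p q) (PolyTensor p' q') :=
  ⟨fun ab => (f.onPos ab.1, g.onPos ab.2), fun ab d => (f.onDir ab.1 d.1, g.onDir ab.2 d.2)⟩

/-- An isomorphism of polynomial functors. -/
structure PolyIso (p q : PFunctor.{0}) where
  hom : PolyHom p q
  inv : PolyHom q p
  hom_inv : hom.comp inv = PolyHom.id p
  inv_hom : inv.comp hom = PolyHom.id q
/-- Splitting a sigma type over `Option α` as a sum. -/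
def sigmaOptionEquivSum {α : Type} (F : Option α → Type) :
    (Σ o : Option α, F o) ≃ F none ⊕ Σ a : α, F (some a) where
  toFun x := match x with
    | ⟨none, y⟩ => Sum.inl y
    | ⟨some a, y⟩ => Sum.inr ⟨a, y⟩
  invFun x := match x with
    | Sum.inl y => ⟨none, y⟩
    | Sum.inr ⟨a, y⟩ => ⟨some a, y⟩
  left_inv := by rintro ⟨(_ | a), y⟩ <;> rfl
  right_inv := by rintro (y | ⟨a, y⟩) <;> rfl

/-- The canonical (lexicographic) equivalence `(Σ i : Fin n, Fin (m i)) ≃ Fin (∑ i, m i)`. -/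
def finSigmaEquiv : ∀ {n : ℕ} (m : Fin n → ℕ), (Σ i : Fin n, Fin (m i)) ≃ Fin (∑ i, m i)
  | 0, _ => (Equiv.equivOfIsEmpty _ (Fin 0)).trans (finCongr (by simp))
  | n + 1, m =>
    (Equiv.sigmaCongrLeft (β := fun i => Fin (m i)) (finSuccEquiv n).symm).symm.trans <|
      (sigmaOptionEquivSum fun o => Fin (m ((finSuccEquiv n).symm o))).trans <|
        (Equiv.sumCongr (finCongr (congrArg m finSuccEquiv_symm_none))
            ((Equiv.sigmaCongr (Equiv.refl (Fin n))
                (fun a => finCongr (congrArg m (finSuccEquiv_symm_some a)))).trans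
              (finSigmaEquiv fun a => m a.succ))).trans <|
          finSumFinEquiv.trans (finCongr (Fin.sum_univ_succ m).symm)

/-- Tensor product of a finite family of polynomials: positions and directions multiply. -/
def tensorFam {n : ℕ} (F : Fin n → PFunctor.{0}) : PFunctor.{0} :=
  ⟨∀ i, (F i).A, fun a => ∀ i, (F i).B (a i)⟩

/-- The n-fold Dirichlet tensor power p^⊗n. -/
def nPow (p : PFunctor.{0}) (n : ℕ) : PFunctor.{0} :=
  tensorFam (fun _ : Fin n => p)

/-- Tensor product of a family of polynomial maps. -/
def tensorMapFam {n : ℕ} {F G : Fin n → PFunctor.{0}} (f : ∀ i, PolyHom (F i) (G i)) :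
    PolyHom (tensorFam F) (tensorFam G) :=
  ⟨fun a i => (f i).onPos (a i), fun a d i => (f i).onDir (a i) (d i)⟩

def leftUnitHom (p : PFunctor.{0}) : PolyHom (PolyTensor yPoly p) p :=
  ⟨fun a => a.2, fun _ d => (PUnit.unit, d)⟩

def rightUnitHom (p : PFunctor.{0}) : PolyHom (PolyTensor p yPoly) p :=
  ⟨fun a => a.1, fun _ d => (d, PUnit.unit)⟩

def assocHom (p : PFunctor.{0}) :
    PolyHom (PolyTensor (PolyTensor p p) p) (PolyTensor p (PolyTensor p p)) :=
  ⟨fun a => (a.1.1, (a.1.2, a.2)), fun _ d => ((d.1, d.2.1), d.2.2)⟩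

/-- The canonical identification p^⊗0 ≅ y (as a map to y). -/
def zeroToY (p : PFunctor.{0}) : PolyHom (nPow p 0) yPoly :=
  ⟨fun _ => PUnit.unit, fun _ _ => fun i => i.elim0⟩

/-- The canonical map p^⊗1 → p; it is the identity of p transported along p^⊗1 ≅ p. -/
def unary (p : PFunctor.{0}) : PolyHom (nPow p 1) p :=
  ⟨fun a => a 0, fun a d i => match i with | ⟨0, _⟩ => d⟩

/-- The canonical map p^⊗2 → p ⊗ p. -/
def binHom (p : PFunctor.{0}) : PolyHom (nPow p 2) (PolyTensor p p) :=
  ⟨fun a => (a 0, a 1), fun a d i => match i with | ⟨0, _⟩ => d.1 | ⟨1, _⟩ => d.2⟩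

/-- The canonical reassociation map ⊗ᵢ p^⊗(m i) → p^⊗(∑ m i). -/
def reassocHom (p : PFunctor.{0}) {n : ℕ} (m : Fin n → ℕ) :
    PolyHom (tensorFam fun i => nPow p (m i)) (nPow p (∑ i, m i)) :=
  ⟨fun a k => a ((finSigmaEquiv m).symm k).1 ((finSigmaEquiv m).symm k).2,
   fun a d i j =>
     cast (congrArg (fun s : Σ i, Fin (m i) => p.B (a s.1 s.2))
       ((finSigmaEquiv m).symm_apply_apply ⟨i, j⟩)) (d (finSigmaEquiv m ⟨i, j⟩))⟩

section
variable {p q r s : PFunctor.{0}}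

theorem PolyHom.ext'' {f g : PolyHom p q} (h1 : f.onPos = g.onPos)
    (h2 : ∀ a (d : q.B (f.onPos a)),
      f.onDir a d = g.onDir a (cast (congrArg q.B (congrFun h1 a)) d)) : f = g := by
  obtain ⟨fP, fD⟩ := f; obtain ⟨gP, gD⟩ := g
  dsimp at h1; subst h1
  simp only [mk.injEq, heq_eq_eq, true_and]
  funext a d; exact h2 a d

example (f : PolyHom p q) (g : PolyHom q r) (h : PolyHom r s) :
    (f.comp g).comp h = f.comp (g.comp h) := rfl
example (f : PolyHom p q) : (PolyHom.id p).comp f = f := rfl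
example (f : PolyHom p q) : f.comp (PolyHom.id q) = f := rfl
example {p' q' r' : PFunctor.{0}} (f : PolyHom p q) (g : PolyHom q r)
    (f' : PolyHom p' q') (g' : PolyHom q' r') :
    (f.comp g).tensor (f'.comp g') = (f.tensor f').comp (g.tensor g') := rfl
example : (PolyHom.id p).tensor (PolyHom.id q) = PolyHom.id (PolyTensor p q) := rfl
end
section
variable {p q r s : PFunctor.{0}}

/-- cast between tensor powers -/
def castPow (p : PFunctor.{0}) {n n' : ℕ} (h : n = n') : PolyHom (nPow p n) (nPow p n') :=
  ⟨fun a i => a (Fin.cast h.symm i), fun a d i => d (Fin.cast h i)⟩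

example : castPow p (rfl : 3 = 3) = PolyHom.id _ := rfl
example {n n' : ℕ} (h : n = n') (f : ∀ k, PolyHom (nPow p k) p) :
    (castPow p h).comp (f n') = f n := by subst h; rfl

/-- general associator -/
def assocT (p q r : PFunctor.{0}) :
    PolyHom (PolyTensor (PolyTensor p q) r) (PolyTensor p (PolyTensor q r)) :=
  ⟨fun a => (a.1.1, (a.1.2, a.2)), fun _ d => ((d.1, d.2.1), d.2.2)⟩

example : assocT p p p = assocHom p := rfl
example {p' q' r' : PFunctor.{0}} (f : PolyHom p p') (g : PolyHom q q') (h : PolyHom r r') :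
    ((f.tensor g).tensor h).comp (assocT p' q' r') = (assocT p q r).comp (f.tensor (g.tensor h)) := rfl

example (f : PolyHom p q) :
    ((PolyHom.id yPoly).tensor f).comp (leftUnitHom q) = (leftUnitHom p).comp f := rfl

/-- cons for families -/
def fcons {n : ℕ} {F : Fin (n + 1) → Sort*} (x : F 0) (y : ∀ j : Fin n, F j.succ) :
    ∀ i : Fin (n + 1), F i := fun i =>
  match i with
  | ⟨0, _⟩ => x
  | ⟨j + 1, h⟩ => y ⟨j, Nat.lt_of_succ_lt_succ h⟩

@[simp] theorem fcons_zero {n : ℕ} {F : Fin (n + 1) → Sort*} (x : F 0) (y : ∀ j : Fin n, F j.succ) :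
    fcons x y 0 = x := rfl

@[simp] theorem fcons_succ {n : ℕ} {F : Fin (n + 1) → Sort*} (x : F 0) (y : ∀ j : Fin n, F j.succ)
    (j : Fin n) : fcons x y j.succ = y j := rfl

def consF {n : ℕ} (F : Fin (n + 1) → PFunctor.{0}) :
    PolyHom (tensorFam F) (PolyTensor (F 0) (tensorFam fun j : Fin n => F j.succ)) :=
  ⟨fun a => (a 0, fun j => a j.succ), fun a d => fcons (F := fun i => (F i).B (a i)) d.1 d.2⟩

def consInvF {n : ℕ} (F : Fin (n + 1) → PFunctor.{0}) :
    PolyHom (PolyTensor (F 0) (tensorFam fun j : Fin n => F j.succ)) (tensorFam F) :=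
  ⟨fun xy => fcons (F := fun i => (F i).A) xy.1 xy.2, fun xy d => (d 0, fun j => d j.succ)⟩

end
section
example {n : ℕ} (F : Fin (n+1) → PFunctor.{0}) :
    (consInvF F).comp (consF F) = PolyHom.id _ := rfl
end
section
variable {p : PFunctor.{0}} (η : PolyHom yPoly p) (mu : PolyHom (PolyTensor p p) p)

def muN (p : PFunctor.{0}) (η : PolyHom yPoly p) (mu : PolyHom (PolyTensor p p) p) :
    ∀ n : ℕ, PolyHom (nPow p n) p
  | 0 => (zeroToY p).comp η
  | n + 1 => (consF (fun _ : Fin (n + 1) => p)).comp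
      (((PolyHom.id p).tensor (muN p η mu n)).comp mu)

theorem muN_one (h_right : ((PolyHom.id p).tensor η).comp mu = rightUnitHom p) :
    muN p η mu 1 = unary p := by
  show (consF (fun _ : Fin 1 => p)).comp
      (((PolyHom.id p).tensor ((zeroToY p).comp η)).comp mu) = unary p
  have : ((PolyHom.id p).tensor ((zeroToY p).comp η)).comp mu
      = ((PolyHom.id p).tensor (zeroToY p)).comp (rightUnitHom p) := by
    rw [← h_right]; rfl
  rw [this]
  refine PolyHom.ext'' rfl fun a d => ?_

  funext i
  induction i using Fin.cases with
  | zero => rfl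
  | succ j => exact j.elim0

theorem muN_two (h_right : ((PolyHom.id p).tensor η).comp mu = rightUnitHom p) :
    muN p η mu 2 = (binHom p).comp mu := by
  show (consF (fun _ : Fin 2 => p)).comp
      (((PolyHom.id p).tensor (muN p η mu 1)).comp mu) = (binHom p).comp mu
  rw [muN_one η mu h_right]
  refine PolyHom.ext'' rfl fun a d => ?_

  funext i
  induction i using Fin.cases with
  | zero => rfl
  | succ j =>
    induction j using Fin.cases with
    | zero => rfl
    | succ j => exact j.elim0
end
section
theorem consF_natural {n : ℕ} {F G : Fin (n + 1) → PFunctor.{0}}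
    (f : ∀ i, PolyHom (F i) (G i)) :
    (tensorMapFam f).comp (consF G) =
      (consF F).comp ((f 0).tensor (tensorMapFam fun j : Fin n => f j.succ)) := by
  refine PolyHom.ext'' rfl fun a d => ?_
  funext i
  induction i using Fin.cases with
  | zero => rfl
  | succ j => rfl

theorem tensorMapFam_comp {n : ℕ} {F G H : Fin n → PFunctor.{0}}
    (f : ∀ i, PolyHom (F i) (G i)) (g : ∀ i, PolyHom (G i) (H i)) :
    tensorMapFam (fun i => (f i).comp (g i)) = (tensorMapFam f).comp (tensorMapFam g) := rfl
end
section
def appendHom (p : PFunctor.{0}) (a b : ℕ) :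
    PolyHom (PolyTensor (nPow p a) (nPow p b)) (nPow p (a + b)) :=
  ⟨fun xy k => Sum.elim xy.1 xy.2 (finSumFinEquiv.symm k),
   fun xy d =>
     (fun i => cast (congrArg (fun s => p.B (Sum.elim xy.1 xy.2 s))
        (finSumFinEquiv.symm_apply_apply (Sum.inl i))) (d (finSumFinEquiv (Sum.inl i))),
      fun j => cast (congrArg (fun s => p.B (Sum.elim xy.1 xy.2 s))
        (finSumFinEquiv.symm_apply_apply (Sum.inr j))) (d (finSumFinEquiv (Sum.inr j))))⟩

theorem cast_eval {ι : Sort*} {C : ι → Sort*} (d : ∀ k, C k) {k k' : ι} (h : k = k')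
    {T : _} (hT : C k = T) (hT' : C k' = T) : cast hT (d k) = cast hT' (d k') := by
  subst h; rfl

theorem npow_cast_app (p : PFunctor.{0}) {N : ℕ} {c c' : Fin N → p.A} (hc : c = c')
    (h : (nPow p N).B c = (nPow p N).B c') (d : (nPow p N).B c) (j : Fin N) :
    cast h d j = cast (congrArg p.B (congrFun hc j)) (d j) := by subst hc; rfl

theorem tensorB_cast {q r : PFunctor.{0}} {X Y : (PolyTensor q r).A}
    (hx : X.1 = Y.1) (hy : X.2 = Y.2)
    (h : (PolyTensor q r).B X = (PolyTensor q r).B Y) (d : (PolyTensor q r).B X) :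
    cast h d = (cast (congrArg q.B hx) d.1, cast (congrArg r.B hy) d.2) := by
  obtain ⟨x1, x2⟩ := X; obtain ⟨y1, y2⟩ := Y
  dsimp at hx hy; subst hx; subst hy; rfl

-- L3 : base case of append
theorem append_zero (p : PFunctor.{0}) (b : ℕ) :
    (appendHom p 0 b).comp (castPow p (Nat.zero_add b)) =
      ((zeroToY p).tensor (PolyHom.id (nPow p b))).comp (leftUnitHom (nPow p b)) := by
  have h1 : ((appendHom p 0 b).comp (castPow p (Nat.zero_add b))).onPos =
      (((zeroToY p).tensor (PolyHom.id (nPow p b))).comp (leftUnitHom (nPow p b))).onPos := by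
    funext xy; funext k
    show Sum.elim xy.1 xy.2 (finSumFinEquiv.symm (Fin.cast (Nat.zero_add b).symm k)) = xy.2 k
    have : Fin.cast (Nat.zero_add b).symm k = Fin.natAdd 0 k := by ext; simp
    rw [this, finSumFinEquiv_symm_apply_natAdd]; rfl
  refine PolyHom.ext'' h1 fun xy d => ?_
  show (_, _) = (_, _)
  refine Prod.ext ?_ ?_
  · funext i; exact i.elim0
  · funext j
    dsimp only [PolyHom.comp, PolyHom.tensor, PolyHom.id, leftUnitHom, zeroToY]
    erw [npow_cast_app p (congrFun h1 xy)]
    exact cast_eval d (by ext; simp) _ _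
end
section
-- L2' : successor case of append
theorem append_succ (p : PFunctor.{0}) (a b : ℕ) :
    appendHom p (a + 1) b =
      ((consF (fun _ : Fin (a + 1) => p)).tensor (PolyHom.id (nPow p b))).comp
        ((assocT p (nPow p a) (nPow p b)).comp
          (((PolyHom.id p).tensor (appendHom p a b)).comp
            ((consInvF (fun _ : Fin (a + b + 1) => p)).comp
              (castPow p ((Nat.succ_add a b).symm))))) := by
  have h1 : (appendHom p (a + 1) b).onPos =
      (((consF (fun _ : Fin (a + 1) => p)).tensor (PolyHom.id (nPow p b))).comp
        ((assocT p (nPow p a) (nPow p b)).comp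
          (((PolyHom.id p).tensor (appendHom p a b)).comp
            ((consInvF (fun _ : Fin (a + b + 1) => p)).comp
              (castPow p ((Nat.succ_add a b).symm)))))).onPos := by
    funext xy; funext k
    obtain ⟨s, rfl⟩ := finSumFinEquiv.surjective k
    dsimp only [appendHom, PolyHom.comp, PolyHom.tensor, PolyHom.id, consF, consInvF,
      assocT, castPow]
    rcases s with i | j
    · simp only [Equiv.symm_apply_apply]
      induction i using Fin.cases with
      | zero => rfl
      | succ i' =>
        rw [show (Fin.cast (Nat.succ_add a b) (finSumFinEquiv (Sum.inl (Fin.succ i'))) :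
            Fin (a + b + 1)) = Fin.succ (Fin.castAdd b i') from by ext; simp]
        rw [fcons_succ]
        simp [finSumFinEquiv_symm_apply_castAdd]
        rfl
    · simp only [Equiv.symm_apply_apply]
      rw [show (Fin.cast (Nat.succ_add a b) (finSumFinEquiv (Sum.inr j)) :
          Fin (a + b + 1)) = Fin.succ (Fin.natAdd a j) from by ext; simp; omega]
      rw [fcons_succ]
      simp [finSumFinEquiv_symm_apply_natAdd]
      rfl
  refine PolyHom.ext'' h1 fun xy d => ?_
  dsimp only [appendHom, PolyHom.comp, PolyHom.tensor, PolyHom.id, consF, consInvF,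
    assocT, castPow]
  refine congrArg₂ Prod.mk (funext fun i => ?_) (funext fun j => ?_)
  · induction i using Fin.cases with
    | zero =>
      erw [fcons_zero, npow_cast_app p (congrFun h1 xy)]
      exact eq_of_heq ((cast_heq _ _).trans ((congr_arg_heq d (by ext; simp)).trans (cast_heq _ _).symm))
    | succ i' =>
      erw [fcons_succ]
      erw [npow_cast_app p (congrFun h1 xy), cast_cast]
      exact cast_eval d (by ext; simp) _ _
  · erw [npow_cast_app p (congrFun h1 xy), cast_cast]
    exact cast_eval d (by ext; simp; omega) _ _
end
section
variable {p : PFunctor.{0}} (η : PolyHom yPoly p) (mu : PolyHom (PolyTensor p p) p)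

theorem muN_cast (p : PFunctor.{0}) (η : PolyHom yPoly p) (mu : PolyHom (PolyTensor p p) p)
    {n n' : ℕ} (h : n = n') :
    (castPow p h).comp (muN p η mu n') = muN p η mu n := by subst h; rfl

theorem comp_assoc' {p q r s : PFunctor.{0}} (f : PolyHom p q) (g : PolyHom q r)
    (h : PolyHom r s) : (f.comp g).comp h = f.comp (g.comp h) := rfl

theorem append_mu (h_left : (η.tensor (PolyHom.id p)).comp mu = leftUnitHom p)
    (h_assoc : (mu.tensor (PolyHom.id p)).comp mu =
      (assocHom p).comp (((PolyHom.id p).tensor mu).comp mu)) (a b : ℕ) :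
    (appendHom p a b).comp (muN p η mu (a + b)) =
      ((muN p η mu a).tensor (muN p η mu b)).comp mu := by
  induction a with
  | zero =>
    calc (appendHom p 0 b).comp (muN p η mu (0 + b))
        = (appendHom p 0 b).comp ((castPow p (Nat.zero_add b)).comp (muN p η mu b)) := by
          rw [muN_cast p η mu (Nat.zero_add b)]
      _ = ((appendHom p 0 b).comp (castPow p (Nat.zero_add b))).comp (muN p η mu b) := rfl
      _ = (((zeroToY.{_, 0} p).tensor (PolyHom.id (nPow p b))).comp
            (leftUnitHom (nPow p b))).comp (muN p η mu b) := by rw [append_zero]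
      _ = ((zeroToY p).tensor (muN p η mu b)).comp (leftUnitHom p) := rfl
      _ = ((zeroToY p).tensor (muN p η mu b)).comp ((η.tensor (PolyHom.id p)).comp mu) := by
          rw [h_left]
      _ = ((muN p η mu 0).tensor (muN p η mu b)).comp mu := rfl
  | succ a ih =>
    rw [show (appendHom p (a + 1) b).comp (muN p η mu (a + 1 + b))
        = ((((consF (fun _ : Fin (a + 1) => p)).tensor (PolyHom.id (nPow p b))).comp
        ((assocT p (nPow p a) (nPow p b)).comp
          (((PolyHom.id p).tensor (appendHom p a b)).comp
            ((consInvF (fun _ : Fin (a + b + 1) => p)).comp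
              (castPow p ((Nat.succ_add a b).symm)))))).comp (muN p η mu (a + 1 + b)))
        from by rw [append_succ]; rfl]
    erw [comp_assoc', comp_assoc', comp_assoc', comp_assoc']
    erw [muN_cast p η mu (Nat.succ_add a b).symm]
    calc ((consF fun _ : Fin (a + 1) => p).tensor (PolyHom.id (nPow p b))).comp
          ((assocT p (nPow p a) (nPow p b)).comp
            (((PolyHom.id p).tensor (appendHom p a b)).comp
              ((consInvF fun _ : Fin (a + b + 1) => p).comp (muN p η mu (a + b + 1)))))
        = ((consF fun _ : Fin (a + 1) => p).tensor (PolyHom.id (nPow p b))).comp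
          ((assocT p (nPow p a) (nPow p b)).comp
            (((PolyHom.id p).tensor ((appendHom p a b).comp (muN p η mu (a + b)))).comp mu)) := rfl
      _ = ((consF fun _ : Fin (a + 1) => p).tensor (PolyHom.id (nPow p b))).comp
          ((assocT p (nPow p a) (nPow p b)).comp
            (((PolyHom.id p).tensor (((muN p η mu a).tensor (muN p η mu b)).comp mu)).comp mu)) := by
          rw [ih]
      _ = (((consF fun _ : Fin (a + 1) => p).comp
              ((PolyHom.id p).tensor (muN p η mu a))).tensor (muN p η mu b)).comp
            ((assocHom p).comp (((PolyHom.id p).tensor mu).comp mu)) := rfl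
      _ = (((consF fun _ : Fin (a + 1) => p).comp
              ((PolyHom.id p).tensor (muN p η mu a))).tensor (muN p η mu b)).comp
            ((mu.tensor (PolyHom.id p)).comp mu) := by rw [h_assoc]
      _ = show PolyHom (PolyTensor (tensorFam fun _ : Fin (a + 1) => p) (nPow p b)) p from
            ((muN p η mu (a + 1)).tensor (muN p η mu b)).comp mu := rfl
end
section
theorem finSigmaEquiv_zero_val {n : ℕ} (m : Fin (n + 1) → ℕ) (j : Fin (m 0)) :
    ((finSigmaEquiv m ⟨0, j⟩ : Fin _) : ℕ) = (j : ℕ) := by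
  set e := (finSuccEquiv n).symm with he
  set s := (Equiv.sigmaCongrLeft (β := fun i : Fin (n + 1) => Fin (m i)) e).symm
      ⟨0, j⟩ with hsdef
  have hs : Equiv.sigmaCongrLeft (β := fun i : Fin (n + 1) => Fin (m i)) e s = ⟨0, j⟩ :=
    (Equiv.sigmaCongrLeft e).apply_symm_apply _
  obtain ⟨o, y⟩ := s
  cases o with
  | some a =>
    exfalso
    have h0 : (e (some a) : Fin (n + 1)) = 0 := congrArg Sigma.fst hs
    rw [he, finSuccEquiv_symm_some] at h0
    exact Fin.succ_ne_zero a h0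
  | none =>
    have hv : (y : ℕ) = (j : ℕ) := congrArg (fun s : Σ i : Fin (n + 1), Fin (m i) => (s.2 : ℕ)) hs
    rw [← hs]
    simp only [finSigmaEquiv, Equiv.trans_apply, Equiv.symm_apply_apply]
    erw [show (finSuccEquiv n).symm.sigmaCongrLeft.symm (⟨e none, y⟩ : Σ i, Fin (m i)) = ⟨none, y⟩ from
      (Equiv.sigmaCongrLeft (β := fun i : Fin (n + 1) => Fin (m i)) e).symm_apply_apply ⟨none, y⟩]
    simp [sigmaOptionEquivSum, hv]

theorem finSigmaEquiv_succ_val {n : ℕ} (m : Fin (n + 1) → ℕ) (i : Fin n) (j : Fin (m i.succ)) :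
    ((finSigmaEquiv m ⟨i.succ, j⟩ : Fin _) : ℕ) =
      m 0 + ((finSigmaEquiv (fun a : Fin n => m a.succ) ⟨i, j⟩ : Fin _) : ℕ) := by
  set e := (finSuccEquiv n).symm with he
  set s := (Equiv.sigmaCongrLeft (β := fun i : Fin (n + 1) => Fin (m i)) e).symm
      ⟨i.succ, j⟩ with hsdef
  have hs : Equiv.sigmaCongrLeft (β := fun i : Fin (n + 1) => Fin (m i)) e s = ⟨i.succ, j⟩ :=
    (Equiv.sigmaCongrLeft e).apply_symm_apply _
  obtain ⟨o, y⟩ := s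
  cases o with
  | none =>
    exfalso
    have h0 : (e none : Fin (n + 1)) = i.succ := congrArg Sigma.fst hs
    rw [he, finSuccEquiv_symm_none] at h0
    exact Fin.succ_ne_zero i h0.symm
  | some a =>
    have ha : a = i := by
      have h0 : (e (some a) : Fin (n + 1)) = i.succ := congrArg Sigma.fst hs
      rw [he, finSuccEquiv_symm_some] at h0
      exact Fin.succ_injective _ h0
    subst ha
    have hv : (y : ℕ) = (j : ℕ) :=
      congrArg (fun s : Σ i : Fin (n + 1), Fin (m i) => (s.2 : ℕ)) hs
    rw [← hs]
    simp only [finSigmaEquiv, Equiv.trans_apply, Equiv.symm_apply_apply]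
    simp [sigmaOptionEquivSum, Equiv.sigmaCongr, Equiv.sigmaCongrRight]
    rw [Fin.ext hv]
    rfl
end
section
theorem reassoc_succ (p : PFunctor.{0}) {n : ℕ} (m : Fin (n + 1) → ℕ) :
    reassocHom p m = (consF fun i => nPow p (m i)).comp
      (((PolyHom.id (nPow p (m 0))).tensor (reassocHom p fun i : Fin n => m i.succ)).comp
        ((appendHom p (m 0) (∑ i : Fin n, m i.succ)).comp
          (castPow p (Fin.sum_univ_succ m).symm))) := by
  have h1 : (reassocHom p m).onPos = ((consF fun i => nPow p (m i)).comp
      (((PolyHom.id (nPow p (m 0))).tensor (reassocHom p fun i : Fin n => m i.succ)).comp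
        ((appendHom p (m 0) (∑ i : Fin n, m i.succ)).comp
          (castPow p (Fin.sum_univ_succ m).symm)))).onPos := by
    funext a; funext k
    obtain ⟨⟨i, j⟩, rfl⟩ := (finSigmaEquiv m).surjective k
    dsimp only [reassocHom, PolyHom.comp, PolyHom.tensor, PolyHom.id, consF, appendHom, castPow]
    rw [Equiv.symm_apply_apply]
    induction i using Fin.cases with
    | zero =>
      rw [show Fin.cast (Fin.sum_univ_succ m) (finSigmaEquiv m ⟨0, j⟩)
          = Fin.castAdd (∑ i : Fin n, m i.succ) j from by
        ext; simp [finSigmaEquiv_zero_val]]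
      simp [finSumFinEquiv_symm_apply_castAdd]
      rfl
    | succ i' =>
      rw [show Fin.cast (Fin.sum_univ_succ m) (finSigmaEquiv m ⟨i'.succ, j⟩)
          = Fin.natAdd (m 0) (finSigmaEquiv (fun a : Fin n => m a.succ) ⟨i', j⟩) from by
        ext; simp [finSigmaEquiv_succ_val]]
      simp only [finSumFinEquiv_symm_apply_natAdd, Sum.elim_inr]
      erw [Sum.elim_inr, Equiv.symm_apply_apply]
  refine PolyHom.ext'' h1 fun a d => ?_
  dsimp only [reassocHom, PolyHom.comp, PolyHom.tensor, PolyHom.id, consF, appendHom, castPow]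
  funext i
  induction i using Fin.cases with
  | zero =>
    erw [fcons_zero]
    funext j
    erw [npow_cast_app p (congrFun h1 a), cast_cast]
    exact cast_eval d (by ext; simp [finSigmaEquiv_zero_val]) _ _
  | succ i' =>
    erw [fcons_succ]
    funext j
    erw [npow_cast_app p (congrFun h1 a), cast_cast, cast_cast]
    exact cast_eval d (by ext; simp [finSigmaEquiv_succ_val]) _ _
end
section
variable {p : PFunctor.{0}} (η : PolyHom yPoly p) (mu : PolyHom (PolyTensor p p) p)

theorem main_coh (h_left : (η.tensor (PolyHom.id p)).comp mu = leftUnitHom p)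
    (h_assoc : (mu.tensor (PolyHom.id p)).comp mu =
      (assocHom p).comp (((PolyHom.id p).tensor mu).comp mu)) :
    ∀ (n : ℕ) (m : Fin n → ℕ),
      (tensorMapFam fun i => muN p η mu (m i)).comp (muN p η mu n) =
        (reassocHom p m).comp (muN p η mu (∑ i, m i)) := by
  intro n
  induction n with
  | zero =>
    intro m
    have hz : (∑ i, m i) = 0 := by simp
    have L4 : tensorMapFam (fun i : Fin 0 => muN p η mu (m i)) =
        (reassocHom p m).comp (castPow p hz) := by
      refine PolyHom.ext'' ?_ fun a d => ?_
      · funext a; funext i; exact i.elim0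
      · funext i; exact i.elim0
    calc (tensorMapFam fun i : Fin 0 => muN p η mu (m i)).comp (muN p η mu 0)
        = ((reassocHom p m).comp (castPow p hz)).comp (muN p η mu 0) := by rw [L4]; rfl
      _ = (reassocHom p m).comp ((castPow p hz).comp (muN p η mu 0)) := rfl
      _ = (reassocHom p m).comp (muN p η mu (∑ i, m i)) := by rw [muN_cast]
  | succ n ih =>
    intro m
    calc (tensorMapFam fun i : Fin (n + 1) => muN p η mu (m i)).comp (muN p η mu (n + 1))
        = ((tensorMapFam fun i : Fin (n + 1) => muN p η mu (m i)).comp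
            (consF fun _ : Fin (n + 1) => p)).comp
              (((PolyHom.id p).tensor (muN p η mu n)).comp mu) := rfl
      _ = ((consF fun i : Fin (n + 1) => nPow p (m i)).comp
            ((muN p η mu (m 0)).tensor
              (tensorMapFam fun j : Fin n => muN p η mu (m j.succ)))).comp
              (((PolyHom.id p).tensor (muN p η mu n)).comp mu) := by
          rw [consF_natural]
      _ = (consF fun i : Fin (n + 1) => nPow p (m i)).comp
            (((muN p η mu (m 0)).tensor
              ((tensorMapFam fun j : Fin n => muN p η mu (m j.succ)).comp
                (muN p η mu n))).comp mu) := rfl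
      _ = (consF fun i : Fin (n + 1) => nPow p (m i)).comp
            (((muN p η mu (m 0)).tensor
              ((reassocHom p fun j : Fin n => m j.succ).comp
                (muN p η mu (∑ j : Fin n, m j.succ)))).comp mu) := by
          rw [ih (fun j : Fin n => m j.succ)]
      _ = (consF fun i : Fin (n + 1) => nPow p (m i)).comp
            (((PolyHom.id (nPow p (m 0))).tensor
                (reassocHom p fun j : Fin n => m j.succ)).comp
              (((muN p η mu (m 0)).tensor (muN p η mu (∑ j : Fin n, m j.succ))).comp mu)) := rfl
      _ = (consF fun i : Fin (n + 1) => nPow p (m i)).comp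
            (((PolyHom.id (nPow p (m 0))).tensor
                (reassocHom p fun j : Fin n => m j.succ)).comp
              ((appendHom p (m 0) (∑ j : Fin n, m j.succ)).comp
                (muN p η mu (m 0 + ∑ j : Fin n, m j.succ)))) := by
          rw [append_mu η mu h_left h_assoc]
      _ = (consF fun i : Fin (n + 1) => nPow p (m i)).comp
            (((PolyHom.id (nPow p (m 0))).tensor
                (reassocHom p fun j : Fin n => m j.succ)).comp
              ((appendHom p (m 0) (∑ j : Fin n, m j.succ)).comp
                ((castPow p (Fin.sum_univ_succ m).symm).comp
                  (muN p η mu (∑ i, m i))))) := by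
          rw [muN_cast p η mu (Fin.sum_univ_succ m).symm]
      _ = ((consF fun i : Fin (n + 1) => nPow p (m i)).comp
            (((PolyHom.id (nPow p (m 0))).tensor
                (reassocHom p fun j : Fin n => m j.succ)).comp
              ((appendHom p (m 0) (∑ j : Fin n, m j.succ)).comp
                (castPow p (Fin.sum_univ_succ m).symm)))).comp
                  (muN p η mu (∑ i, m i)) := rfl
      _ = (reassocHom p m).comp (muN p η mu (∑ i, m i)) := by rw [← reassoc_succ]
end
/-- A ⊗-monoid (collective) (p, η, mu) determines a dynamic operad whose n-ary
coalgebra is the singleton coalgebra on the n-ary monoidal product μₙ : p^⊗n → p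
(singleton coalgebras have trivial updates, so the coalgebra structure is exactly the
map μₙ): the identitor {id_p} → S₁ is the isomorphism given by μ₁ = unary (the identity
of p transported along p ≅ p^⊗1), μ₀ and μ₂ are given by the unit and multiplication,
and the operadic compositor maps are the isomorphisms of singleton coalgebras expressing
that composing the μ's agrees with μ_{∑ m i} up to the canonical reassociation. -/
theorem stmt_15 (p : PFunctor.{0}) (η : PolyHom yPoly p) (mu : PolyHom (PolyTensor p p) p)
    (h_left : (η.tensor (PolyHom.id p)).comp mu = leftUnitHom p)
    (h_right : ((PolyHom.id p).tensor η).comp mu = rightUnitHom p)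
    (h_assoc : (mu.tensor (PolyHom.id p)).comp mu =
      (assocHom p).comp (((PolyHom.id p).tensor mu).comp mu)) :
    ∃ μ : ∀ n : ℕ, PolyHom (nPow p n) p,
      μ 0 = (zeroToY p).comp η ∧
      μ 1 = unary p ∧
      μ 2 = (binHom p).comp mu ∧
      ∀ {n : ℕ} (m : Fin n → ℕ),
        (tensorMapFam fun i => μ (m i)).comp (μ n) =
          (reassocHom p m).comp (μ (∑ i, m i)) := by
  exact ⟨muN p η mu, rfl, muN_one η mu h_right, muN_two η mu h_right,
    fun {n} m => main_coh η mu h_left h_assoc n m⟩
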